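/- Let k be a field and i ≥ 2 an integer. Consider the set Z⁰ of tuples consisting of: a column vector v = (a_i, c_i) ∈ k²; 2×2 matrices M_r = [[a_r, b_r],[c_r, d_r]] over k for each r with 2 ≤ r ≤ i−1; and a row vector w = (c_1, d_1) ∈ k²; such that all entries occurring (a_i, c_i, the a_r, b_r, c_r, d_r for 2 ≤ r ≤ i−1, and c_1, d_1) are nonzero, and all consecutive products vanish: M_{i−1}·v = 0, M_r·M_{r+1} = 0 for 2 ≤ r ≤ i−2, and w·M_2 = 0 (when i = 2 the only condition is w·v = 0). Then the map Z⁰ → (k^×)^{2i−1} sending such a tuple to (a_i, c_i, a_{i−1}, c_{i−1}, …, a_2, c_2, c_1) is a bijection. Consequently, the group (k^×)^{2i} acting by rescaling the 2i coordinate lines (i.e., simultaneously rescaling the corresponding rows and columns of the matrices and vectors) acts transitively on Z⁰. -/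

import Mathlib

noncomputable section

/-- The data of a would-be complex `0 → D → D² → ⋯ → D² → D → 0` with `i + 1` terms:
`v = (a_i, c_i)` is the first differential (a column vector), `M j` (for `j : Fin (i-2)`)
encodes the `2 × 2` matrix `M_{j+2} = [[a_{j+2}, b_{j+2}], [c_{j+2}, d_{j+2}]]`, and
`w = (c_1, d_1)` is the last differential (a row vector). -/
structure ComplexData (k : Type*) (i : ℕ) where
  v : k × k
  M : Fin (i - 2) → (k × k) × (k × k)
  w : k × k

/-- The chain of differentials of `x : ComplexData k i`, encoded uniformly as `2 × 2`
matrices: `chain i x r = M_r` for `2 ≤ r ≤ i - 1`, while the column vector `v` (at `r = i`)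
and the row vector `w` (at `r = 1`) are padded by zeros. Then `x` defines a complex iff
`chain i x r * chain i x (r + 1) = 0` for `1 ≤ r ≤ i - 1`. -/
def chain {k : Type*} [Field k] (i : ℕ) (x : ComplexData k i) (r : ℕ) :
    Matrix (Fin 2) (Fin 2) k :=
  if r = 1 then !![x.w.1, x.w.2; 0, 0]
  else if r = i then !![x.v.1, 0; x.v.2, 0]
  else if h : 2 ≤ r ∧ r ≤ i - 1 then
    !![(x.M ⟨r - 2, by omega⟩).1.1, (x.M ⟨r - 2, by omega⟩).1.2;
       (x.M ⟨r - 2, by omega⟩).2.1, (x.M ⟨r - 2, by omega⟩).2.2]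
  else 0

/-- The set `Z⁰`: complexes all of whose coefficients are nonzero. -/
def Z0 (k : Type*) [Field k] (i : ℕ) : Type _ :=
  { x : ComplexData k i //
      (x.v.1 ≠ 0 ∧ x.v.2 ≠ 0) ∧
      (∀ j, (x.M j).1.1 ≠ 0 ∧ (x.M j).1.2 ≠ 0 ∧ (x.M j).2.1 ≠ 0 ∧ (x.M j).2.2 ≠ 0) ∧
      (x.w.1 ≠ 0 ∧ x.w.2 ≠ 0) ∧
      (∀ r, 1 ≤ r → r + 1 ≤ i → chain i x r * chain i x (r + 1) = 0) }

/-- The projection `Z⁰ → (kˣ)^{2i-1}` recording `(a_i, c_i)`, the `(a_r, c_r)` for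
`2 ≤ r ≤ i - 1`, and `c_1`. -/
def projZ0 {k : Type*} [Field k] (i : ℕ) (x : Z0 k i) :
    (kˣ × kˣ) × (Fin (i - 2) → kˣ × kˣ) × kˣ :=
  ((Units.mk0 x.1.v.1 x.2.1.1, Units.mk0 x.1.v.2 x.2.1.2),
   fun j => (Units.mk0 (x.1.M j).1.1 (x.2.2.1 j).1,
             Units.mk0 (x.1.M j).2.1 (x.2.2.1 j).2.2.1),
   Units.mk0 x.1.w.1 x.2.2.2.1.1)

namespace Z0Dev

variable {k : Type*} [Field k]

/-- entry extraction of 2x2 matrix product -/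
lemma mul_entry (A B : Matrix (Fin 2) (Fin 2) k) (p q : Fin 2) :
    (A * B) p q = A p 0 * B 0 q + A p 1 * B 1 q := by
  simp [Matrix.mul_apply, Fin.sum_univ_two]

lemma M_congr {i : ℕ} (x : ComplexData k i) {p q : ℕ} (hp : p < i - 2) (h : p = q) :
    x.M ⟨p, hp⟩ = x.M ⟨q, h ▸ hp⟩ := by subst h; rfl

lemma chain_one {i : ℕ} (hi : 2 ≤ i) (x : ComplexData k i) :
    chain i x 1 = !![x.w.1, x.w.2; 0, 0] := by
  rw [chain, if_pos rfl]

lemma chain_top {i : ℕ} (hi : 2 ≤ i) (x : ComplexData k i) :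
    chain i x i = !![x.v.1, 0; x.v.2, 0] := by
  rw [chain, if_neg (by omega), if_pos rfl]

lemma chain_mid {i : ℕ} (x : ComplexData k i) (r : ℕ) (h1 : 2 ≤ r) (h2 : r ≤ i - 1)
    (hr : r - 2 < i - 2) :
    chain i x r = !![(x.M ⟨r-2, hr⟩).1.1, (x.M ⟨r-2, hr⟩).1.2;
       (x.M ⟨r-2, hr⟩).2.1, (x.M ⟨r-2, hr⟩).2.2] := by
  rw [chain, if_neg (by omega), if_neg (by omega), dif_pos ⟨h1, h2⟩]


/-- first entry of the "next" column at level `j+3` -/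
def nxtA {i : ℕ} (x : ComplexData k i) (j : Fin (i-2)) : k :=
  if h : (j:ℕ)+3 ≤ i-1 then (x.M ⟨(j:ℕ)+1, by omega⟩).1.1 else x.v.1

def nxtC {i : ℕ} (x : ComplexData k i) (j : Fin (i-2)) : k :=
  if h : (j:ℕ)+3 ≤ i-1 then (x.M ⟨(j:ℕ)+1, by omega⟩).2.1 else x.v.2

lemma nxtA_ne {i : ℕ} (x : Z0 k i) (j : Fin (i-2)) : nxtA x.1 j ≠ 0 := by
  unfold nxtA; split
  · exact (x.2.2.1 _).1
  · exact x.2.1.1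

lemma nxtC_ne {i : ℕ} (x : Z0 k i) (j : Fin (i-2)) : nxtC x.1 j ≠ 0 := by
  unfold nxtC; split
  · exact (x.2.2.1 _).2.2.1
  · exact x.2.1.2

lemma keyM {i : ℕ} (x : Z0 k i) (j : Fin (i-2)) :
    (x.1.M j).1.2 * nxtC x.1 j = -((x.1.M j).1.1 * nxtA x.1 j) ∧
    (x.1.M j).2.2 * nxtC x.1 j = -((x.1.M j).2.1 * nxtA x.1 j) := by
  have hj := j.2
  have h := x.2.2.2.2 ((j:ℕ)+2) (by omega) (by omega)
  rw [chain_mid x.1 ((j:ℕ)+2) (by omega) (by omega) (by omega)] at h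
  have e1 : ∀ hh, x.1.M ⟨(j:ℕ)+2-2, hh⟩ = x.1.M j :=
    fun hh => congrArg _ (Fin.ext (by simp))
  rw [e1] at h
  by_cases htop : (j:ℕ)+3 = i
  · rw [show (j:ℕ)+2+1 = i from by omega, chain_top (by omega) x.1] at h
    have h0 := congrFun (congrFun h 0) 0
    have h1 := congrFun (congrFun h 1) 0
    rw [mul_entry] at h0 h1
    simp at h0 h1
    unfold nxtA nxtC
    rw [dif_neg (by omega), dif_neg (by omega)]
    exact ⟨by linear_combination h0, by linear_combination h1⟩
  · rw [chain_mid x.1 ((j:ℕ)+2+1) (by omega) (by omega) (by omega)] at h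
    have e2 : ∀ hh, x.1.M ⟨(j:ℕ)+2+1-2, hh⟩ = x.1.M ⟨(j:ℕ)+1, by omega⟩ :=
      fun hh => congrArg _ (Fin.ext (by simp))
    rw [e2] at h
    have h0 := congrFun (congrFun h 0) 0
    have h1 := congrFun (congrFun h 1) 0
    rw [mul_entry] at h0 h1
    simp at h0 h1
    unfold nxtA nxtC
    rw [dif_pos (by omega), dif_pos (by omega)]
    constructor
    · linear_combination h0
    · linear_combination h1


/-- the column at level 2 -/
def n2A {i : ℕ} (x : ComplexData k i) : k :=
  if h : 2 ≤ i-1 then (x.M ⟨0, by omega⟩).1.1 else x.v.1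

def n2C {i : ℕ} (x : ComplexData k i) : k :=
  if h : 2 ≤ i-1 then (x.M ⟨0, by omega⟩).2.1 else x.v.2

lemma n2A_ne {i : ℕ} (x : Z0 k i) : n2A x.1 ≠ 0 := by
  unfold n2A; split
  · exact (x.2.2.1 _).1
  · exact x.2.1.1

lemma n2C_ne {i : ℕ} (x : Z0 k i) : n2C x.1 ≠ 0 := by
  unfold n2C; split
  · exact (x.2.2.1 _).2.2.1
  · exact x.2.1.2

lemma keyW {i : ℕ} (hi : 2 ≤ i) (x : Z0 k i) :
    x.1.w.2 * n2C x.1 = -(x.1.w.1 * n2A x.1) := by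
  have h := x.2.2.2.2 1 le_rfl (by omega)
  rw [chain_one hi x.1] at h
  by_cases h2 : i = 2
  · rw [show (1+1:ℕ) = i from by omega, chain_top hi x.1] at h
    have h0 := congrFun (congrFun h 0) 0
    rw [mul_entry] at h0
    simp at h0
    unfold n2A n2C
    rw [dif_neg (by omega), dif_neg (by omega)]
    linear_combination h0
  · rw [chain_mid x.1 (1+1) (by omega) (by omega) (by omega)] at h
    have e1 : ∀ hh, x.1.M ⟨1+1-2, hh⟩ = x.1.M ⟨0, by omega⟩ :=
      fun hh => congrArg _ (Fin.ext (by simp))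
    rw [e1] at h
    have h0 := congrFun (congrFun h 0) 0
    rw [mul_entry] at h0
    simp at h0
    unfold n2A n2C
    rw [dif_pos (by omega), dif_pos (by omega)]
    linear_combination h0


variable {i : ℕ}

/-- first entries of the columns, from the target data -/
def colA (hi : 2 ≤ i) (d : (kˣ × kˣ) × (Fin (i - 2) → kˣ × kˣ) × kˣ) (r : ℕ) : k :=
  if h : 2 ≤ r ∧ r ≤ i-1 then ((d.2.1 ⟨r-2, by omega⟩).1 : k) else (d.1.1 : k)

def colC (hi : 2 ≤ i) (d : (kˣ × kˣ) × (Fin (i - 2) → kˣ × kˣ) × kˣ) (r : ℕ) : k :=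
  if h : 2 ≤ r ∧ r ≤ i-1 then ((d.2.1 ⟨r-2, by omega⟩).2 : k) else (d.1.2 : k)

lemma colA_ne (hi : 2 ≤ i) (d) (r : ℕ) : colA (k := k) hi d r ≠ 0 := by
  unfold colA; split <;> exact Units.ne_zero _

lemma colC_ne (hi : 2 ≤ i) (d) (r : ℕ) : colC (k := k) hi d r ≠ 0 := by
  unfold colC; split <;> exact Units.ne_zero _

lemma colA_congr (hi : 2 ≤ i) (d) {p q : ℕ} (h : p = q) :
    colA (k := k) hi d p = colA hi d q := by rw [h]

lemma colC_congr (hi : 2 ≤ i) (d) {p q : ℕ} (h : p = q) :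
    colC (k := k) hi d p = colC hi d q := by rw [h]

lemma colA_top (hi : 2 ≤ i) (d) : colA (k := k) hi d i = (d.1.1 : k) := dif_neg (by omega)
lemma colC_top (hi : 2 ≤ i) (d) : colC (k := k) hi d i = (d.1.2 : k) := dif_neg (by omega)

lemma colA_fin (hi : 2 ≤ i) (d) (j : Fin (i-2)) :
    colA (k := k) hi d ((j:ℕ)+2) = ((d.2.1 j).1 : k) := by
  have hj := j.2
  rw [colA, dif_pos ⟨by omega, by omega⟩]
  exact congrArg (fun z => ((d.2.1 z).1 : k)) (Fin.ext (by simp))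

lemma colC_fin (hi : 2 ≤ i) (d) (j : Fin (i-2)) :
    colC (k := k) hi d ((j:ℕ)+2) = ((d.2.1 j).2 : k) := by
  have hj := j.2
  rw [colC, dif_pos ⟨by omega, by omega⟩]
  exact congrArg (fun z => ((d.2.1 z).2 : k)) (Fin.ext (by simp))

/-- the inverse of the projection -/
def build (hi : 2 ≤ i) (d : (kˣ × kˣ) × (Fin (i - 2) → kˣ × kˣ) × kˣ) :
    ComplexData k i where
  v := ((d.1.1 : k), (d.1.2 : k))
  M := fun j =>
    ((colA hi d ((j:ℕ)+2), -(colA hi d ((j:ℕ)+2) * colA hi d ((j:ℕ)+2+1)) / colC hi d ((j:ℕ)+2+1)),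
     (colC hi d ((j:ℕ)+2), -(colC hi d ((j:ℕ)+2) * colA hi d ((j:ℕ)+2+1)) / colC hi d ((j:ℕ)+2+1)))
  w := ((d.2.2 : k), -((d.2.2 : k) * colA hi d (1+1)) / colC hi d (1+1))

lemma chain_build_one (hi : 2 ≤ i) (d) :
    chain i (build (k := k) hi d) 1 =
      !![(d.2.2 : k), -((d.2.2 : k) * colA hi d (1+1)) / colC hi d (1+1); 0, 0] := by
  rw [chain_one hi]; rfl

lemma chain_build_top (hi : 2 ≤ i) (d) :
    chain i (build (k := k) hi d) i = !![colA hi d i, 0; colC hi d i, 0] := by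
  rw [chain_top hi, colA_top, colC_top]; rfl

lemma chain_build_mid (hi : 2 ≤ i) (d) (r : ℕ) (h1 : 2 ≤ r) (h2 : r ≤ i-1) :
    chain i (build (k := k) hi d) r =
      !![colA hi d r, -(colA hi d r * colA hi d (r+1)) / colC hi d (r+1);
         colC hi d r, -(colC hi d r * colA hi d (r+1)) / colC hi d (r+1)] := by
  rw [chain_mid _ r h1 h2 (by omega)]
  show !![colA hi d (r-2+2), -(colA hi d (r-2+2) * colA hi d (r-2+2+1)) / colC hi d (r-2+2+1);
         colC hi d (r-2+2), -(colC hi d (r-2+2) * colA hi d (r-2+2+1)) / colC hi d (r-2+2+1)] = _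
  rw [colA_congr hi d (show r-2+2 = r by omega), colC_congr hi d (show r-2+2 = r by omega),
      colA_congr hi d (show r-2+2+1 = r+1 by omega), colC_congr hi d (show r-2+2+1 = r+1 by omega)]

lemma key_prod_mid (P Q B B' A C A2 C2 : k) (hC : C ≠ 0) (hC2 : C2 ≠ 0)
    (hB : B = -(P*A)/C) (hB' : B' = -(Q*A)/C) :
    !![P, B; Q, B'] * !![A, -(A*A2)/C2; C, -(C*A2)/C2] = 0 := by
  subst hB hB'
  ext p q
  rw [mul_entry]
  fin_cases p <;> fin_cases q <;>
    simp only [Matrix.cons_val', Matrix.cons_val_zero, Matrix.cons_val_one, Matrix.head_cons,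
      Matrix.empty_val', Matrix.cons_val_fin_one, Matrix.head_fin_const, Matrix.zero_apply,
      Fin.zero_eta, Fin.mk_one, Matrix.of_apply] <;>
    field_simp <;> try ring

lemma key_prod_top (P Q B B' A C : k) (hC : C ≠ 0)
    (hB : B = -(P*A)/C) (hB' : B' = -(Q*A)/C) :
    !![P, B; Q, B'] * !![A, 0; C, 0] = 0 := by
  subst hB hB'
  ext p q
  rw [mul_entry]
  fin_cases p <;> fin_cases q <;>
    simp only [Matrix.cons_val', Matrix.cons_val_zero, Matrix.cons_val_one, Matrix.head_cons,
      Matrix.empty_val', Matrix.cons_val_fin_one, Matrix.head_fin_const, Matrix.zero_apply,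
      Fin.zero_eta, Fin.mk_one, Matrix.of_apply] <;>
    field_simp <;> try ring

lemma build_chain (hi : 2 ≤ i) (d) :
    ∀ r, 1 ≤ r → r + 1 ≤ i →
      chain i (build (k := k) hi d) r * chain i (build hi d) (r+1) = 0 := by
  intro r h1 h2
  by_cases hr1 : r = 1
  · subst hr1
    by_cases hi2 : 1 + 1 = i
    · rw [chain_build_one hi d, colA_congr hi d (show 1+1 = i by omega),
        colC_congr hi d (show 1+1 = i by omega), hi2, chain_build_top hi d]
      exact key_prod_top _ _ _ _ _ _ (colC_ne hi d i) rfl (by simp)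
    · rw [chain_build_one hi d, chain_build_mid hi d (1+1) (by omega) (by omega)]
      exact key_prod_mid _ _ _ _ _ _ _ _ (colC_ne hi d (1+1)) (colC_ne hi d (1+1+1)) rfl (by simp)
  · rw [chain_build_mid hi d r (by omega) (by omega)]
    by_cases hrt : r + 1 = i
    · rw [hrt, chain_build_top hi d]
      exact key_prod_top _ _ _ _ _ _ (colC_ne hi d i) rfl rfl
    · rw [chain_build_mid hi d (r+1) (by omega) (by omega)]
      exact key_prod_mid _ _ _ _ _ _ _ _ (colC_ne hi d (r+1)) (colC_ne hi d (r+1+1)) rfl rfl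

lemma build_mem (hi : 2 ≤ i) (d) :
    ((build (k := k) hi d).v.1 ≠ 0 ∧ (build hi d).v.2 ≠ 0) ∧
    (∀ j, ((build hi d).M j).1.1 ≠ 0 ∧ ((build hi d).M j).1.2 ≠ 0 ∧
      ((build hi d).M j).2.1 ≠ 0 ∧ ((build hi d).M j).2.2 ≠ 0) ∧
    ((build hi d).w.1 ≠ 0 ∧ (build hi d).w.2 ≠ 0) ∧
    (∀ r, 1 ≤ r → r + 1 ≤ i → chain i (build hi d) r * chain i (build hi d) (r+1) = 0) := by
  refine ⟨⟨Units.ne_zero _, Units.ne_zero _⟩, ?_, ⟨Units.ne_zero _, ?_⟩, build_chain hi d⟩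
  · intro j
    refine ⟨colA_ne hi d _, ?_, colC_ne hi d _, ?_⟩ <;>
    · apply div_ne_zero _ (colC_ne hi d _)
      simp only [neg_ne_zero]
      exact mul_ne_zero (by first | exact colA_ne hi d _ | exact colC_ne hi d _) (colA_ne hi d _)
  · apply div_ne_zero _ (colC_ne hi d _)
    simp only [neg_ne_zero]
    exact mul_ne_zero (Units.ne_zero _) (colA_ne hi d _)


lemma complexdata_ext {x y : ComplexData k i} (h1 : x.v = y.v) (h2 : x.M = y.M)
    (h3 : x.w = y.w) : x = y := by
  cases x; cases y; simp_all

lemma colA_proj_two (hi : 2 ≤ i) (x : Z0 k i) :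
    colA hi (projZ0 i x) (1+1) = n2A x.1 := by
  unfold colA n2A
  by_cases h : 2 ≤ i - 1
  · rw [dif_pos ⟨by omega, by omega⟩, dif_pos h]; rfl
  · rw [dif_neg (by omega), dif_neg h]; rfl

lemma colC_proj_two (hi : 2 ≤ i) (x : Z0 k i) :
    colC hi (projZ0 i x) (1+1) = n2C x.1 := by
  unfold colC n2C
  by_cases h : 2 ≤ i - 1
  · rw [dif_pos ⟨by omega, by omega⟩, dif_pos h]; rfl
  · rw [dif_neg (by omega), dif_neg h]; rfl

lemma colA_proj_nxt (hi : 2 ≤ i) (x : Z0 k i) (j : Fin (i-2)) :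
    colA hi (projZ0 i x) ((j:ℕ)+2+1) = nxtA x.1 j := by
  unfold colA nxtA
  by_cases h : (j:ℕ)+3 ≤ i - 1
  · rw [dif_pos ⟨by omega, by omega⟩, dif_pos h]
    exact congrArg (fun z => (x.1.M z).1.1) (Fin.ext (by simp))
  · rw [dif_neg (by omega), dif_neg h]; rfl

lemma colC_proj_nxt (hi : 2 ≤ i) (x : Z0 k i) (j : Fin (i-2)) :
    colC hi (projZ0 i x) ((j:ℕ)+2+1) = nxtC x.1 j := by
  unfold colC nxtC
  by_cases h : (j:ℕ)+3 ≤ i - 1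
  · rw [dif_pos ⟨by omega, by omega⟩, dif_pos h]
    exact congrArg (fun z => (x.1.M z).2.1) (Fin.ext (by simp))
  · rw [dif_neg (by omega), dif_neg h]; rfl

lemma left_inv (hi : 2 ≤ i) (x : Z0 k i) : build hi (projZ0 i x) = x.1 := by
  apply complexdata_ext
  · show (x.1.v.1, x.1.v.2) = x.1.v
    exact Prod.mk.eta
  · funext j
    show ((colA hi (projZ0 i x) ((j:ℕ)+2), _), (colC hi (projZ0 i x) ((j:ℕ)+2), _)) = _
    rw [colA_fin, colC_fin, colA_proj_nxt hi x j, colC_proj_nxt hi x j]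
    show ((((x.1.M j).1.1 : k), -((x.1.M j).1.1 * nxtA x.1 j) / nxtC x.1 j),
          (((x.1.M j).2.1 : k), -((x.1.M j).2.1 * nxtA x.1 j) / nxtC x.1 j)) = x.1.M j
    have hb : -((x.1.M j).1.1 * nxtA x.1 j) / nxtC x.1 j = (x.1.M j).1.2 :=
      ((eq_div_iff (nxtC_ne x j)).mpr (keyM x j).1).symm
    have hd : -((x.1.M j).2.1 * nxtA x.1 j) / nxtC x.1 j = (x.1.M j).2.2 :=
      ((eq_div_iff (nxtC_ne x j)).mpr (keyM x j).2).symm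
    rw [hb, hd]
  · show (x.1.w.1, -(x.1.w.1 * colA hi (projZ0 i x) (1+1)) / colC hi (projZ0 i x) (1+1)) = x.1.w
    rw [colA_proj_two hi x, colC_proj_two hi x]
    have hb : -(x.1.w.1 * n2A x.1) / n2C x.1 = x.1.w.2 :=
      ((eq_div_iff (n2C_ne x)).mpr (keyW hi x)).symm
    rw [hb]

lemma right_inv (hi : 2 ≤ i) (d) :
    projZ0 i (⟨build (k := k) hi d, build_mem hi d⟩ : Z0 k i) = d := by
  refine Prod.ext (Prod.ext ?_ ?_) (Prod.ext ?_ ?_)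
  · exact Units.ext rfl
  · exact Units.ext rfl
  · funext j
    refine Prod.ext (Units.ext ?_) (Units.ext ?_)
    · show ((⟨build hi d, build_mem hi d⟩ : Z0 k i).1.M j).1.1 = ((d.2.1 j).1 : k)
      exact colA_fin hi d j
    · show ((⟨build hi d, build_mem hi d⟩ : Z0 k i).1.M j).2.1 = ((d.2.1 j).2 : k)
      exact colC_fin hi d j
  · exact Units.ext rfl


/-- ratio of the `a`-entries of `y` and `x` at level `r` -/
def ratioA (x y : Z0 k i) (r : ℕ) : kˣ :=
  if h : 2 ≤ r ∧ r ≤ i-1 then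
    Units.mk0 ((y.1.M ⟨r-2, by omega⟩).1.1 / (x.1.M ⟨r-2, by omega⟩).1.1)
      (div_ne_zero (y.2.2.1 _).1 (x.2.2.1 _).1)
  else Units.mk0 (y.1.v.1 / x.1.v.1) (div_ne_zero y.2.1.1 x.2.1.1)

def ratioC (x y : Z0 k i) (r : ℕ) : kˣ :=
  if h : 2 ≤ r ∧ r ≤ i-1 then
    Units.mk0 ((y.1.M ⟨r-2, by omega⟩).2.1 / (x.1.M ⟨r-2, by omega⟩).2.1)
      (div_ne_zero (y.2.2.1 _).2.2.1 (x.2.2.1 _).2.2.1)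
  else Units.mk0 (y.1.v.2 / x.1.v.2) (div_ne_zero y.2.1.2 x.2.1.2)

lemma ratioA_top_val (x y : Z0 k i) : ((ratioA x y i : kˣ) : k) = y.1.v.1 / x.1.v.1 := by
  rw [ratioA, dif_neg (by omega)]; rfl

lemma ratioC_top_val (x y : Z0 k i) : ((ratioC x y i : kˣ) : k) = y.1.v.2 / x.1.v.2 := by
  rw [ratioC, dif_neg (by omega)]; rfl

lemma ratioA_fin_val (x y : Z0 k i) (j : Fin (i-2)) :
    ((ratioA x y ((j:ℕ)+2) : kˣ) : k) = (y.1.M j).1.1 / (x.1.M j).1.1 := by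
  have hj := j.2
  rw [ratioA, dif_pos ⟨by omega, by omega⟩]
  show (y.1.M _).1.1 / (x.1.M _).1.1 = _
  rw [show (⟨(j:ℕ)+2-2, by omega⟩ : Fin (i-2)) = j from Fin.ext (by simp)]

lemma ratioC_fin_val (x y : Z0 k i) (j : Fin (i-2)) :
    ((ratioC x y ((j:ℕ)+2) : kˣ) : k) = (y.1.M j).2.1 / (x.1.M j).2.1 := by
  have hj := j.2
  rw [ratioC, dif_pos ⟨by omega, by omega⟩]
  show (y.1.M _).2.1 / (x.1.M _).2.1 = _
  rw [show (⟨(j:ℕ)+2-2, by omega⟩ : Fin (i-2)) = j from Fin.ext (by simp)]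

/-- downward recursion for the scaling factors -/
def nu (x y : Z0 k i) : ℕ → kˣ × kˣ
  | 0 => (ratioA x y i, ratioC x y i)
  | s+1 => (ratioA x y (i-1-s) * (nu x y s).1, ratioC x y (i-1-s) * (nu x y s).1)

def mu (x y : Z0 k i) (r : ℕ) : kˣ × kˣ := nu x y (i-1-r)

lemma mu_top (x y : Z0 k i) : mu x y (i-1) = (ratioA x y i, ratioC x y i) := by
  unfold mu
  rw [Nat.sub_self]
  rfl

lemma mu_rec (x y : Z0 k i) (r : ℕ) (h1 : 1 ≤ r) (h2 : r ≤ i-2) :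
    mu x y r = (ratioA x y (r+1) * (mu x y (r+1)).1,
                ratioC x y (r+1) * (mu x y (r+1)).1) := by
  unfold mu
  rw [show i-1-r = (i-2-r)+1 from by omega]
  show (ratioA x y (i-1-(i-2-r)) * (nu x y (i-2-r)).1,
        ratioC x y (i-1-(i-2-r)) * (nu x y (i-2-r)).1) = _
  rw [show i-1-(i-2-r) = r+1 from by omega, show i-1-(r+1) = i-2-r from by omega]

lemma mu_succ_pair (x y : Z0 k i) (j : Fin (i-2)) :
    ∃ g : kˣ, ((mu x y ((j:ℕ)+2)).1 : k) = (nxtA y.1 j / nxtA x.1 j) * (g:k) ∧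
      ((mu x y ((j:ℕ)+2)).2 : k) = (nxtC y.1 j / nxtC x.1 j) * (g:k) := by
  have hj := j.2
  by_cases h : (j:ℕ)+3 ≤ i-1
  · refine ⟨(mu x y ((j:ℕ)+2+1)).1, ?_, ?_⟩
    · rw [mu_rec x y ((j:ℕ)+2) (by omega) (by omega)]
      show ((ratioA x y ((j:ℕ)+2+1) : kˣ) : k) * _ = _
      have e : (j:ℕ)+2+1 = ((⟨(j:ℕ)+1, by omega⟩ : Fin (i-2)) : ℕ)+2 := by simp
      rw [congrArg (fun z => ((ratioA x y z : kˣ) : k)) e, ratioA_fin_val]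
      simp only [nxtA, dif_pos h]
    · rw [mu_rec x y ((j:ℕ)+2) (by omega) (by omega)]
      show ((ratioC x y ((j:ℕ)+2+1) : kˣ) : k) * _ = _
      have e : (j:ℕ)+2+1 = ((⟨(j:ℕ)+1, by omega⟩ : Fin (i-2)) : ℕ)+2 := by simp
      rw [congrArg (fun z => ((ratioC x y z : kˣ) : k)) e, ratioC_fin_val]
      simp only [nxtC, dif_pos h]
  · refine ⟨1, ?_, ?_⟩
    · rw [show (j:ℕ)+2 = i-1 from by omega, mu_top, Units.val_one, mul_one]
      show ((ratioA x y i : kˣ) : k) = _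
      rw [ratioA_top_val]
      simp only [nxtA, dif_neg h]
    · rw [show (j:ℕ)+2 = i-1 from by omega, mu_top, Units.val_one, mul_one]
      show ((ratioC x y i : kˣ) : k) = _
      rw [ratioC_top_val]
      simp only [nxtC, dif_neg h]

lemma mu_one_pair (hi : 2 ≤ i) (x y : Z0 k i) :
    ∃ g : kˣ, ((mu x y 1).1 : k) = (n2A y.1 / n2A x.1) * (g:k) ∧
      ((mu x y 1).2 : k) = (n2C y.1 / n2C x.1) * (g:k) := by
  by_cases h : 2 ≤ i-1
  · refine ⟨(mu x y (1+1)).1, ?_, ?_⟩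
    · rw [mu_rec x y 1 (by omega) (by omega)]
      show ((ratioA x y (1+1) : kˣ) : k) * _ = _
      have e : (1:ℕ)+1 = ((⟨0, by omega⟩ : Fin (i-2)) : ℕ)+2 := by simp
      rw [congrArg (fun z => ((ratioA x y z : kˣ) : k)) e, ratioA_fin_val]
      simp only [n2A, dif_pos h]
    · rw [mu_rec x y 1 (by omega) (by omega)]
      show ((ratioC x y (1+1) : kˣ) : k) * _ = _
      have e : (1:ℕ)+1 = ((⟨0, by omega⟩ : Fin (i-2)) : ℕ)+2 := by simp
      rw [congrArg (fun z => ((ratioC x y z : kˣ) : k)) e, ratioC_fin_val]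
      simp only [n2C, dif_pos h]
  · refine ⟨1, ?_, ?_⟩
    · conv_lhs => rw [show (1:ℕ) = i-1 from by omega]
      rw [mu_top, Units.val_one, mul_one]
      show ((ratioA x y i : kˣ) : k) = _
      rw [ratioA_top_val]
      simp only [n2A, dif_neg h]
    · conv_lhs => rw [show (1:ℕ) = i-1 from by omega]
      rw [mu_top, Units.val_one, mul_one]
      show ((ratioC x y i : kˣ) : k) = _
      rw [ratioC_top_val]
      simp only [n2C, dif_neg h]

end Z0Dev

/-- The projection recording the nonzero coefficients
`(a_i, c_i, a_{i-1}, c_{i-1}, …, a_2, c_2, c_1)` is a bijection from `Z⁰` onto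
`(kˣ)^{2i-1}`.  Consequently, the group `(kˣ)^{2i}` acting by rescaling the `2i`
coordinate lines (i.e. simultaneously rescaling the corresponding rows and columns of
the matrices and vectors) acts transitively on `Z⁰`: here `μ r` is the pair of scalars
at the pair of lines of level `r` (`1 ≤ r ≤ i - 1`), `t` the scalar at the top line
(level `i`) and `u` the scalar at the bottom line (level `0`). -/
theorem z0_bijection_and_transitivity {k : Type*} [Field k] (i : ℕ) (hi : 2 ≤ i) :
    Function.Bijective (projZ0 (k := k) i) ∧
    ∀ x y : Z0 k i, ∃ (t u : kˣ) (μ : ℕ → kˣ × kˣ),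
      (y.1.v.1 = ((μ (i - 1)).1 : k) * x.1.v.1 * ((t⁻¹ : kˣ) : k) ∧
       y.1.v.2 = ((μ (i - 1)).2 : k) * x.1.v.2 * ((t⁻¹ : kˣ) : k)) ∧
      (∀ j : Fin (i - 2),
        (y.1.M j).1.1
          = ((μ ((j : ℕ) + 1)).1 : k) * (x.1.M j).1.1 * (((μ ((j : ℕ) + 2)).1⁻¹ : kˣ) : k) ∧
        (y.1.M j).1.2
          = ((μ ((j : ℕ) + 1)).1 : k) * (x.1.M j).1.2 * (((μ ((j : ℕ) + 2)).2⁻¹ : kˣ) : k) ∧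
        (y.1.M j).2.1
          = ((μ ((j : ℕ) + 1)).2 : k) * (x.1.M j).2.1 * (((μ ((j : ℕ) + 2)).1⁻¹ : kˣ) : k) ∧
        (y.1.M j).2.2
          = ((μ ((j : ℕ) + 1)).2 : k) * (x.1.M j).2.2 * (((μ ((j : ℕ) + 2)).2⁻¹ : kˣ) : k)) ∧
      (y.1.w.1 = (u : k) * x.1.w.1 * (((μ 1).1⁻¹ : kˣ) : k) ∧
       y.1.w.2 = (u : k) * x.1.w.2 * (((μ 1).2⁻¹ : kˣ) : k)) := by
  constructor
  · have hL : Function.LeftInverse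
        (fun d => (⟨Z0Dev.build hi d, Z0Dev.build_mem hi d⟩ : Z0 k i)) (projZ0 i) :=
      fun x => Subtype.ext (Z0Dev.left_inv hi x)
    have hR : Function.RightInverse
        (fun d => (⟨Z0Dev.build hi d, Z0Dev.build_mem hi d⟩ : Z0 k i)) (projZ0 i) :=
      fun d => Z0Dev.right_inv hi d
    exact ⟨hL.injective, hR.surjective⟩
  · intro x y
    refine ⟨1, Units.mk0 (y.1.w.1 / x.1.w.1) (div_ne_zero y.2.2.2.1.1 x.2.2.2.1.1)
        * (Z0Dev.mu x y 1).1, Z0Dev.mu x y, ⟨?_, ?_⟩, ?_, ⟨?_, ?_⟩⟩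
    · have m1 : ((Z0Dev.mu x y (i-1)).1 : k) = y.1.v.1 / x.1.v.1 := by
        rw [Z0Dev.mu_top x y]
        exact Z0Dev.ratioA_top_val x y
      rw [m1, inv_one, Units.val_one, mul_one]
      exact (div_mul_cancel₀ _ x.2.1.1).symm
    · have m2 : ((Z0Dev.mu x y (i-1)).2 : k) = y.1.v.2 / x.1.v.2 := by
        rw [Z0Dev.mu_top x y]
        exact Z0Dev.ratioC_top_val x y
      rw [m2, inv_one, Units.val_one, mul_one]
      exact (div_mul_cancel₀ _ x.2.1.2).symm
    · intro j
      have hj := j.2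
      have hrec : Z0Dev.mu x y ((j:ℕ)+1)
          = (Z0Dev.ratioA x y ((j:ℕ)+2) * (Z0Dev.mu x y ((j:ℕ)+2)).1,
             Z0Dev.ratioC x y ((j:ℕ)+2) * (Z0Dev.mu x y ((j:ℕ)+2)).1) :=
        Z0Dev.mu_rec x y ((j:ℕ)+1) (by omega) (by omega)
      have m1 : ((Z0Dev.mu x y ((j:ℕ)+1)).1 : k)
          = ((y.1.M j).1.1 / (x.1.M j).1.1) * ((Z0Dev.mu x y ((j:ℕ)+2)).1 : k) := by
        rw [hrec]
        show ((Z0Dev.ratioA x y ((j:ℕ)+2) : kˣ) : k) * _ = _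
        rw [Z0Dev.ratioA_fin_val]
      have m2 : ((Z0Dev.mu x y ((j:ℕ)+1)).2 : k)
          = ((y.1.M j).2.1 / (x.1.M j).2.1) * ((Z0Dev.mu x y ((j:ℕ)+2)).1 : k) := by
        rw [hrec]
        show ((Z0Dev.ratioC x y ((j:ℕ)+2) : kˣ) : k) * _ = _
        rw [Z0Dev.ratioC_fin_val]
      obtain ⟨g, hg1, hg2⟩ := Z0Dev.mu_succ_pair x y j
      have hxb : (x.1.M j).1.2 = -((x.1.M j).1.1 * Z0Dev.nxtA x.1 j) / Z0Dev.nxtC x.1 j :=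
        (eq_div_iff (Z0Dev.nxtC_ne x j)).mpr (Z0Dev.keyM x j).1
      have hyb : (y.1.M j).1.2 = -((y.1.M j).1.1 * Z0Dev.nxtA y.1 j) / Z0Dev.nxtC y.1 j :=
        (eq_div_iff (Z0Dev.nxtC_ne y j)).mpr (Z0Dev.keyM y j).1
      have hxd : (x.1.M j).2.2 = -((x.1.M j).2.1 * Z0Dev.nxtA x.1 j) / Z0Dev.nxtC x.1 j :=
        (eq_div_iff (Z0Dev.nxtC_ne x j)).mpr (Z0Dev.keyM x j).2
      have hyd : (y.1.M j).2.2 = -((y.1.M j).2.1 * Z0Dev.nxtA y.1 j) / Z0Dev.nxtC y.1 j :=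
        (eq_div_iff (Z0Dev.nxtC_ne y j)).mpr (Z0Dev.keyM y j).2
      have hxa := (x.2.2.1 j).1
      have hxc := (x.2.2.1 j).2.2.1
      have hnAx := Z0Dev.nxtA_ne x j
      have hnCx := Z0Dev.nxtC_ne x j
      have hnAy := Z0Dev.nxtA_ne y j
      have hnCy := Z0Dev.nxtC_ne y j
      have hgne : (g : k) ≠ 0 := Units.ne_zero g
      have hmne : ((Z0Dev.mu x y ((j:ℕ)+2)).1 : k) ≠ 0 := Units.ne_zero _
      refine ⟨?_, ?_, ?_, ?_⟩
      · rw [m1, Units.val_inv_eq_inv_val]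
        field_simp
      · rw [hyb, hxb, m1, Units.val_inv_eq_inv_val, hg1, hg2]
        field_simp
      · rw [m2, Units.val_inv_eq_inv_val]
        field_simp
      · rw [hyd, hxd, m2, Units.val_inv_eq_inv_val, hg1, hg2]
        field_simp
    · rw [Units.val_mul, Units.val_inv_eq_inv_val, Units.val_mk0]
      have := x.2.2.2.1.1
      have : ((Z0Dev.mu x y 1).1 : k) ≠ 0 := Units.ne_zero _
      field_simp
    · obtain ⟨g, hg1, hg2⟩ := Z0Dev.mu_one_pair hi x y
      have hxw : x.1.w.2 = -(x.1.w.1 * Z0Dev.n2A x.1) / Z0Dev.n2C x.1 :=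
        (eq_div_iff (Z0Dev.n2C_ne x)).mpr (Z0Dev.keyW hi x)
      have hyw : y.1.w.2 = -(y.1.w.1 * Z0Dev.n2A y.1) / Z0Dev.n2C y.1 :=
        (eq_div_iff (Z0Dev.n2C_ne y)).mpr (Z0Dev.keyW hi y)
      have h1 := x.2.2.2.1.1
      have h2 := Z0Dev.n2A_ne x
      have h3 := Z0Dev.n2C_ne x
      have h4 := Z0Dev.n2A_ne y
      have h5 := Z0Dev.n2C_ne y
      have hgne : (g : k) ≠ 0 := Units.ne_zero g
      rw [Units.val_mul, Units.val_inv_eq_inv_val, Units.val_mk0, hg1, hg2, hxw]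
      conv_lhs => rw [hyw]
      field_simp
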